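/- Let H be a Hermitian matrix and L a matrix on ℂ^d; set K = −(1/2)L*L − iH, define the adjoint Lindblad generator 𝓛*(σ) = LσL* + Kσ + σK* and the Lindblad generator 𝓛(X) = L*XL − (1/2)L*LX − (1/2)XL*L − i(XH − HX). Suppose ρ : ℝ → Matrix (Fin d) (Fin d) ℂ is differentiable with derivative ρ'(t) = 𝓛*(ρ(t)) for all t (i.e. ρ solves the master equation dρ/dt = 𝓛*(ρ)), and that ρ(t) is a faithful density matrix for every t. Then the von Neumann entropy t ↦ S(ρ(t)) is differentiable with d/dt S(ρ(t)) = −tr( ρ(t) · 𝓛(log ρ(t)) ). -/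

import Mathlib

open Matrix Kronecker BigOperators
open scoped ComplexOrder

/-- Matrix logarithm via the spectral functional calculus (junk value `0` off Hermitian matrices). -/
noncomputable def matLog {n : Type*} [Fintype n] [DecidableEq n]
    (A : Matrix n n ℂ) : Matrix n n ℂ :=
  if h : A.IsHermitian then
    (h.eigenvectorUnitary : Matrix n n ℂ) *
      Matrix.diagonal (fun i => (Real.log (h.eigenvalues i) : ℂ)) *
      (star h.eigenvectorUnitary : Matrix n n ℂ)
  else 0

/-- von Neumann entropy  S(ρ) = −tr(ρ log ρ). -/
noncomputable def vnEntropy {n : Type*} [Fintype n] [DecidableEq n] (A : Matrix n n ℂ) : ℝ :=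
  (-(A * matLog A).trace).re

/-- A faithful density matrix: positive definite with unit trace. -/
def IsFaithfulDensityMatrix {n : Type*} [Fintype n] (ρ : Matrix n n ℂ) : Prop :=
  ρ.PosDef ∧ ρ.trace = 1

/-- The Lindblad generator  𝓛(X) = L*XL − (1/2)L*LX − (1/2)XL*L − i[X,H]. -/
noncomputable def lindblad {d : ℕ} (H L X : Matrix (Fin d) (Fin d) ℂ) :
    Matrix (Fin d) (Fin d) ℂ :=
  Lᴴ * X * L - (1 / 2 : ℂ) • (Lᴴ * L * X) - (1 / 2 : ℂ) • (X * (Lᴴ * L)) -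
    Complex.I • (X * H - H * X)

/-- The adjoint Lindblad generator  𝓛*(σ) = LσL* + Kσ + σK*  with
K = −(1/2)L*L − iH. -/
noncomputable def lindbladAdj {d : ℕ} (H L σ : Matrix (Fin d) (Fin d) ℂ) :
    Matrix (Fin d) (Fin d) ℂ :=
  L * σ * Lᴴ + (-((1 / 2 : ℂ) • (Lᴴ * L)) - Complex.I • H) * σ +
    σ * (-((1 / 2 : ℂ) • (Lᴴ * L)) - Complex.I • H)ᴴ

section Helpers
open scoped InnerProductSpace
variable {d : ℕ}

-- conjugation lemma: (U D U*)^m etc.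
lemma conj_mul_conj (U : Matrix.unitaryGroup (Fin d) ℂ) (D E : Matrix (Fin d) (Fin d) ℂ) :
    ((U : Matrix (Fin d) (Fin d) ℂ) * D * star (U : Matrix (Fin d) (Fin d) ℂ)) *
      ((U : Matrix (Fin d) (Fin d) ℂ) * E * star (U : Matrix (Fin d) (Fin d) ℂ)) =
    (U : Matrix (Fin d) (Fin d) ℂ) * (D * E) * star (U : Matrix (Fin d) (Fin d) ℂ) := by
  have h : star (U : Matrix (Fin d) (Fin d) ℂ) * (U : Matrix (Fin d) (Fin d) ℂ) = 1 :=
    Unitary.coe_star_mul_self U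
  calc ((U : Matrix (Fin d) (Fin d) ℂ) * D * star (U : Matrix (Fin d) (Fin d) ℂ)) *
      ((U : Matrix (Fin d) (Fin d) ℂ) * E * star (U : Matrix (Fin d) (Fin d) ℂ))
      = (U : Matrix (Fin d) (Fin d) ℂ) * D * (star (U : Matrix (Fin d) (Fin d) ℂ) * (U : Matrix (Fin d) (Fin d) ℂ)) * E * star (U : Matrix (Fin d) (Fin d) ℂ) := by
        noncomm_ring
    _ = _ := by rw [h]; noncomm_ring

lemma unitary_entry_bound (U : Matrix.unitaryGroup (Fin d) ℂ) (i j : Fin d) :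
    ‖(U : Matrix (Fin d) (Fin d) ℂ) i j‖ ≤ 1 := by
  have h : star (U : Matrix (Fin d) (Fin d) ℂ) * (U : Matrix (Fin d) (Fin d) ℂ) = 1 :=
    Unitary.coe_star_mul_self U
  have h2 := congrFun (congrFun h j) j
  simp [Matrix.mul_apply, Matrix.one_apply, Matrix.star_apply] at h2
  have h3 : (∑ k, ‖(U : Matrix (Fin d) (Fin d) ℂ) k j‖ ^ 2 : ℝ) = 1 := by
    have := congrArg Complex.re h2
    simpa [Complex.sq_norm, Complex.normSq_apply] using this
  have h4 : ‖(U : Matrix (Fin d) (Fin d) ℂ) i j‖ ^ 2 ≤ 1 := by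
    rw [← h3]
    exact Finset.single_le_sum (f := fun k => ‖(U : Matrix (Fin d) (Fin d) ℂ) k j‖^2)
      (fun k _ => sq_nonneg _) (Finset.mem_univ i)
  nlinarith [norm_nonneg ((U : Matrix (Fin d) (Fin d) ℂ) i j)]

local notation "Mat" => Matrix (Fin d) (Fin d) ℂ

lemma my_conj_pow (U : Matrix.unitaryGroup (Fin d) ℂ) (μ : Fin d → ℂ) (m : ℕ) :
    ((U : Mat) * diagonal μ * star (U : Mat)) ^ m =
      (U : Mat) * diagonal (fun i => μ i ^ m) * star (U : Mat) := by
  induction m with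
  | zero =>
    simp [Matrix.mul_assoc, Unitary.coe_mul_star_self U]
  | succ m ih =>
    rw [pow_succ, ih, conj_mul_conj, Matrix.diagonal_mul_diagonal]
    simp [pow_succ]

lemma my_trace_conj (U : Matrix.unitaryGroup (Fin d) ℂ) (D : Mat) :
    ((U : Mat) * D * star (U : Mat)).trace = D.trace := by
  rw [Matrix.trace_mul_cycle, Unitary.coe_star_mul_self U, Matrix.one_mul]


lemma trace_diag_conj_mul (U : Matrix.unitaryGroup (Fin d) ℂ) (μ : Fin d → ℂ) (M : Mat) :
    ((U : Mat) * diagonal μ * star (U : Mat) * M).trace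
      = ∑ i, μ i * (star (U : Mat) * M * (U : Mat)) i i := by
  have : (U : Mat) * diagonal μ * star (U : Mat) * M
      = (U : Mat) * (diagonal μ * (star (U : Mat) * M)) := by noncomm_ring
  rw [this, Matrix.trace_mul_comm, Matrix.mul_assoc]
  simp [Matrix.trace, Matrix.diag, Matrix.diagonal_mul]

lemma entry_conj_bound (U : Matrix.unitaryGroup (Fin d) ℂ) (M : Mat) (i : Fin d) :
    ‖(star (U : Mat) * M * (U : Mat)) i i‖ ≤ ∑ j, ∑ k, ‖M j k‖ := by
  calc ‖(star (U : Mat) * M * (U : Mat)) i i‖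
      = ‖∑ k, (∑ j, (star (U : Mat)) i j * M j k) * (U : Mat) k i‖ := by
        simp [Matrix.mul_apply]
    _ ≤ ∑ k, ‖(∑ j, (star (U : Mat)) i j * M j k) * (U : Mat) k i‖ := norm_sum_le _ _
    _ ≤ ∑ k, ∑ j, ‖(star (U : Mat)) i j * M j k * (U : Mat) k i‖ := by
        refine Finset.sum_le_sum fun k _ => ?_
        rw [Finset.sum_mul]
        exact norm_sum_le _ _
    _ ≤ ∑ k, ∑ j, ‖M j k‖ := by
        refine Finset.sum_le_sum fun k _ => Finset.sum_le_sum fun j _ => ?_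
        rw [norm_mul, norm_mul]
        have h1 : ‖(star (U : Mat)) i j‖ ≤ 1 := by
          rw [Matrix.star_apply, norm_star]; exact unitary_entry_bound U j i
        have h2 : ‖(U : Mat) k i‖ ≤ 1 := unitary_entry_bound U k i
        calc ‖(star (U:Mat)) i j‖ * ‖M j k‖ * ‖(U:Mat) k i‖
            ≤ 1 * ‖M j k‖ * 1 := by gcongr
          _ = ‖M j k‖ := by ring
    _ = ∑ j, ∑ k, ‖M j k‖ := Finset.sum_comm

lemma trace_diag_conj_mul_re_bound (U : Matrix.unitaryGroup (Fin d) ℂ) (μ : Fin d → ℝ)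
    (M : Mat) {b : ℝ} (hb : ∀ i, |μ i| ≤ b) :
    |(((U : Mat) * diagonal (fun i => (μ i : ℂ)) * star (U : Mat) * M).trace).re|
      ≤ d * (b * ∑ j, ∑ k, ‖M j k‖) := by
  have hS : (0:ℝ) ≤ ∑ j, ∑ k, ‖M j k‖ :=
    Finset.sum_nonneg fun j _ => Finset.sum_nonneg fun k _ => norm_nonneg _
  calc |(((U : Mat) * diagonal (fun i => (μ i : ℂ)) * star (U : Mat) * M).trace).re|
      ≤ ‖((U : Mat) * diagonal (fun i => (μ i : ℂ)) * star (U : Mat) * M).trace‖ :=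
        Complex.abs_re_le_norm _
    _ = ‖∑ i, (μ i : ℂ) * (star (U : Mat) * M * (U : Mat)) i i‖ := by
        rw [trace_diag_conj_mul]
    _ ≤ ∑ i, ‖(μ i : ℂ) * (star (U : Mat) * M * (U : Mat)) i i‖ := norm_sum_le _ _
    _ ≤ ∑ _i : Fin d, b * ∑ j, ∑ k, ‖M j k‖ := by
        refine Finset.sum_le_sum fun i _ => ?_
        rw [norm_mul, Complex.norm_real, Real.norm_eq_abs]
        exact mul_le_mul (hb i) (entry_conj_bound U M i) (norm_nonneg _)
          ((abs_nonneg _).trans (hb i))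
    _ = d * (b * ∑ j, ∑ k, ‖M j k‖) := by simp [Finset.sum_const, mul_comm]

lemma conj_sub (U V X Y : Mat) : U*X*V - U*Y*V = U*(X-Y)*V := by noncomm_ring

lemma conj_smul (c : ℂ) (U V X : Mat) : c • (U*X*V) = U*(c•X)*V := by
  rw [← smul_mul_assoc, ← mul_smul_comm]

lemma conj_sum {α : Type*} (s : Finset α) (U V : Mat) (f : α → Mat) :
    ∑ k ∈ s, U * (f k) * V = U * (∑ k ∈ s, f k) * V := by
  rw [← Finset.sum_mul, ← Finset.mul_sum]

lemma spectral_pow {A : Mat} (hA : A.IsHermitian) (m : ℕ) :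
    A ^ m = (hA.eigenvectorUnitary : Mat) *
      diagonal (fun i => ((hA.eigenvalues i : ℂ) ^ m)) *
      (star hA.eigenvectorUnitary : Mat) := by
  conv_lhs => rw [hA.spectral_theorem, Unitary.conjStarAlgAut_apply]
  rw [my_conj_pow]
  rfl

lemma trace_pow {A : Mat} (hA : A.IsHermitian) (m : ℕ) :
    (A ^ m).trace = ∑ i, (hA.eigenvalues i : ℂ) ^ m := by
  rw [spectral_pow hA m, my_trace_conj]
  simp [Matrix.trace, Matrix.diag]

lemma matLog_eq {A : Mat} (hA : A.IsHermitian) :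
    matLog A = (hA.eigenvectorUnitary : Mat) *
      diagonal (fun i => (Real.log (hA.eigenvalues i) : ℂ)) *
      (star hA.eigenvectorUnitary : Mat) := by
  rw [matLog, dif_pos hA]

lemma err_matrix {A : Mat} (hA : A.IsHermitian) (a : ℕ → ℝ) (N : ℕ) :
    (∑ k ∈ Finset.range N, (a k : ℂ) • A ^ k) - matLog A - 1
      = (hA.eigenvectorUnitary : Mat) *
        diagonal (fun i => (((∑ k ∈ Finset.range N, a k * hA.eigenvalues i ^ k)
            - Real.log (hA.eigenvalues i) - 1 : ℝ) : ℂ)) *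
        (star hA.eigenvectorUnitary : Mat) := by
  have hU : (hA.eigenvectorUnitary : Mat) * 1 * (star hA.eigenvectorUnitary : Mat) = 1 := by
    simp [Unitary.coe_mul_star_self hA.eigenvectorUnitary]
  calc (∑ k ∈ Finset.range N, (a k : ℂ) • A ^ k) - matLog A - 1
      = (∑ k ∈ Finset.range N, (hA.eigenvectorUnitary : Mat) *
          ((a k : ℂ) • diagonal (fun i => (hA.eigenvalues i : ℂ) ^ k)) *
          (star hA.eigenvectorUnitary : Mat))
        - (hA.eigenvectorUnitary : Mat) *
            diagonal (fun i => (Real.log (hA.eigenvalues i) : ℂ)) *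
            (star hA.eigenvectorUnitary : Mat)
        - (hA.eigenvectorUnitary : Mat) * 1 * (star hA.eigenvectorUnitary : Mat) := by
        rw [hU, matLog_eq hA]
        congr 2
        refine Finset.sum_congr rfl fun k _ => ?_
        rw [spectral_pow hA k, conj_smul]
    _ = (hA.eigenvectorUnitary : Mat) *
          ((∑ k ∈ Finset.range N, (a k : ℂ) • diagonal (fun i => (hA.eigenvalues i : ℂ) ^ k))
            - diagonal (fun i => (Real.log (hA.eigenvalues i) : ℂ)) - 1) *
          (star hA.eigenvectorUnitary : Mat) := by
        rw [conj_sum, conj_sub, conj_sub]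
    _ = _ := by
        congr 1
        · congr 1
          ext i j
          rcases eq_or_ne i j with rfl | hij
          · simp [Matrix.sum_apply, Matrix.smul_apply, Matrix.diagonal_apply_eq,
              Matrix.one_apply_eq]
          · simp [Matrix.sum_apply, Matrix.smul_apply, Matrix.diagonal_apply_ne _ hij,
              Matrix.one_apply_ne hij]

lemma dot_bound (M : Mat) (v w : Fin d → ℂ) (hv : ∀ i, ‖v i‖ ≤ 1) (hw : ∀ i, ‖w i‖ ≤ 1) :
    ‖star v ⬝ᵥ (M *ᵥ w)‖ ≤ ∑ j, ∑ k, ‖M j k‖ := by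
  calc ‖star v ⬝ᵥ (M *ᵥ w)‖ = ‖∑ j, star (v j) * ∑ k, M j k * w k‖ := by
        simp [dotProduct, Matrix.mulVec, Pi.star_apply]
    _ ≤ ∑ j, ‖star (v j) * ∑ k, M j k * w k‖ := norm_sum_le _ _
    _ ≤ ∑ j, ∑ k, ‖star (v j) * (M j k * w k)‖ := by
        refine Finset.sum_le_sum fun j _ => ?_
        rw [Finset.mul_sum]
        exact norm_sum_le _ _
    _ ≤ ∑ j, ∑ k, ‖M j k‖ := by
        refine Finset.sum_le_sum fun j _ => Finset.sum_le_sum fun k _ => ?_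
        rw [norm_mul, norm_mul, norm_star]
        calc ‖v j‖ * (‖M j k‖ * ‖w k‖) ≤ 1 * (‖M j k‖ * 1) := by
              gcongr
              · exact hv j
              · exact hw k
          _ = ‖M j k‖ := by ring

lemma qf_eq {A : Mat} (hA : A.IsHermitian) (v : Fin d → ℂ) :
    star v ⬝ᵥ (A *ᵥ v) =
      ∑ i, (hA.eigenvalues i : ℂ) *
        Complex.normSq ((star (hA.eigenvectorUnitary : Mat) *ᵥ v) i) := by
  set U : Mat := (hA.eigenvectorUnitary : Mat) with hUdef
  set w : Fin d → ℂ := star U *ᵥ v with hw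
  have hsw : star v ᵥ* U = star w := by
    rw [hw, Matrix.star_mulVec]
    congr 1
    rw [Matrix.star_eq_conjTranspose, Matrix.conjTranspose_conjTranspose]
  have h1 : A *ᵥ v = U *ᵥ ((diagonal (fun i => (hA.eigenvalues i : ℂ))) *ᵥ w) := by
    conv_lhs => rw [hA.spectral_theorem, Unitary.conjStarAlgAut_apply]
    rw [← Matrix.mulVec_mulVec, ← Matrix.mulVec_mulVec]
    rfl
  rw [h1, Matrix.dotProduct_mulVec, hsw]
  simp only [dotProduct, Matrix.mulVec_diagonal, Pi.star_apply]
  refine Finset.sum_congr rfl fun i _ => ?_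
  rw [Complex.normSq_eq_conj_mul_self, ← Complex.star_def]
  ring

lemma qf_sum_one {A : Mat} (hA : A.IsHermitian) (v : Fin d → ℂ) (hv : star v ⬝ᵥ v = 1) :
    ∑ i, Complex.normSq ((star (hA.eigenvectorUnitary : Mat) *ᵥ v) i) = 1 := by
  set U : Mat := (hA.eigenvectorUnitary : Mat) with hUdef
  set w : Fin d → ℂ := star U *ᵥ v with hw
  have hsw : star v ᵥ* U = star w := by
    rw [hw, Matrix.star_mulVec]
    congr 1
    rw [Matrix.star_eq_conjTranspose, Matrix.conjTranspose_conjTranspose]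
  have h1 : star w ⬝ᵥ w = star v ⬝ᵥ v := by
    rw [hw]
    rw [show star U *ᵥ v = (star U) *ᵥ v from rfl, ← hw, ← hsw, ← Matrix.dotProduct_mulVec,
      Matrix.mulVec_mulVec]
    rw [show U * star U = 1 from Unitary.coe_mul_star_self hA.eigenvectorUnitary, Matrix.one_mulVec]
  have h2 : star w ⬝ᵥ w = (∑ i, (Complex.normSq (w i) : ℂ)) := by
    simp only [dotProduct, Pi.star_apply]
    refine Finset.sum_congr rfl fun i _ => ?_
    rw [Complex.normSq_eq_conj_mul_self, ← Complex.star_def]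
  have := h2.symm.trans (h1.trans hv)
  have := congrArg Complex.re this
  simpa using this

lemma qf_ge {A : Mat} (hA : A.IsHermitian) {c : ℝ} (hc : ∀ i, c ≤ hA.eigenvalues i)
    (v : Fin d → ℂ) (hv : star v ⬝ᵥ v = 1) : c ≤ (star v ⬝ᵥ (A *ᵥ v)).re := by
  rw [qf_eq hA v]
  have : ((∑ i, (hA.eigenvalues i : ℂ) *
      Complex.normSq ((star (hA.eigenvectorUnitary : Mat) *ᵥ v) i)).re)
      = ∑ i, hA.eigenvalues i * Complex.normSq ((star (hA.eigenvectorUnitary : Mat) *ᵥ v) i) := by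
    rw [Complex.re_sum]
    refine Finset.sum_congr rfl fun i _ => ?_
    rw [← Complex.ofReal_mul, Complex.ofReal_re]
  rw [this]
  calc c = c * ∑ i, Complex.normSq ((star (hA.eigenvectorUnitary : Mat) *ᵥ v) i) := by
        rw [qf_sum_one hA v hv, mul_one]
    _ = ∑ i, c * Complex.normSq ((star (hA.eigenvectorUnitary : Mat) *ᵥ v) i) := by
        rw [Finset.mul_sum]
    _ ≤ _ := by
        refine Finset.sum_le_sum fun i _ => ?_
        exact mul_le_mul_of_nonneg_right (hc i) (Complex.normSq_nonneg _)

lemma eigvec_unit {A : Mat} (hA : A.IsHermitian) (i : Fin d) :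
    star (⇑(hA.eigenvectorBasis i) : Fin d → ℂ) ⬝ᵥ (⇑(hA.eigenvectorBasis i) : Fin d → ℂ)
      = 1 := by
  have h := hA.eigenvectorBasis.orthonormal.1 i
  have h2 : (⟪hA.eigenvectorBasis i, hA.eigenvectorBasis i⟫_ℂ) = 1 := by
    rw [inner_self_eq_norm_sq_to_K, h]
    norm_num
  rw [EuclideanSpace.inner_eq_star_dotProduct, dotProduct_comm] at h2
  exact h2

lemma eigvec_entry_bound {A : Mat} (hA : A.IsHermitian) (i k : Fin d) :
    ‖(⇑(hA.eigenvectorBasis i) : Fin d → ℂ) k‖ ≤ 1 := by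
  have := unitary_entry_bound hA.eigenvectorUnitary k i
  rwa [Matrix.IsHermitian.eigenvectorUnitary_apply] at this

lemma hasDerivAt_complex_re {f : ℝ → ℂ} {f' : ℂ} {t : ℝ} (hf : HasDerivAt f f' t) :
    HasDerivAt (fun s => (f s).re) f'.re t := by
  have h := Complex.reCLM.hasFDerivAt.comp_hasDerivAt t hf
  exact h

lemma hda_matmul {M N : ℝ → Mat} {M' N' : Mat} {t : ℝ}
    (hM : ∀ i j, HasDerivAt (fun s => M s i j) (M' i j) t)
    (hN : ∀ i j, HasDerivAt (fun s => N s i j) (N' i j) t) :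
    ∀ i j, HasDerivAt (fun s => (M s * N s) i j) ((M' * N t + M t * N') i j) t := by
  intro i j
  have h : HasDerivAt (fun s => ∑ k, M s i k * N s k j)
      (∑ k, (M' i k * N t k j + M t i k * N' k j)) t :=
    HasDerivAt.fun_sum fun k _ => (hM i k).mul (hN k j)
  simpa [Matrix.mul_apply, Matrix.add_apply, Finset.sum_add_distrib] using h

lemma Dsucc (R S : Mat) (m : ℕ) :
    ∑ l ∈ Finset.range (m+1), R ^ l * S * R ^ (m - l)
      = (∑ l ∈ Finset.range m, R ^ l * S * R ^ (m - 1 - l)) * R + R ^ m * S := by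
  rw [Finset.sum_range_succ, Finset.sum_mul]
  congr 1
  · refine Finset.sum_congr rfl fun l hl => ?_
    rw [Finset.mem_range] at hl
    conv_rhs => rw [Matrix.mul_assoc, ← pow_succ]
    congr 2
    omega
  · simp

lemma hda_pow {R : ℝ → Mat} {S : Mat} {t : ℝ}
    (hR : ∀ i j, HasDerivAt (fun s => R s i j) (S i j) t) (m : ℕ) :
    ∀ i j, HasDerivAt (fun s => (R s ^ m) i j)
      ((∑ l ∈ Finset.range m, R t ^ l * S * R t ^ (m - 1 - l)) i j) t := by
  induction m with
  | zero =>
    intro i j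
    simpa using hasDerivAt_const t ((1 : Mat) i j)
  | succ m ih =>
    intro i j
    have h := hda_matmul ih hR i j
    have e : (∑ l ∈ Finset.range m, R t ^ l * S * R t ^ (m - 1 - l)) * R t + R t ^ m * S
        = ∑ l ∈ Finset.range (m+1), R t ^ l * S * R t ^ (m + 1 - 1 - l) := by
      simp only [Nat.add_sub_cancel]
      rw [Dsucc]
    rw [e] at h
    simpa [pow_succ] using h

lemma trace_D (R S : Mat) (k : ℕ) :
    (∑ l ∈ Finset.range (k+1), R ^ l * S * R ^ (k - l)).trace
      = (k+1 : ℂ) * (R ^ k * S).trace := by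
  rw [Matrix.trace_sum]
  have : ∀ l ∈ Finset.range (k+1), (R ^ l * S * R ^ (k - l)).trace = (R ^ k * S).trace := by
    intro l hl
    rw [Finset.mem_range] at hl
    rw [Matrix.trace_mul_cycle, ← pow_add]
    have hkl : k - l + l = k := by omega
    rw [hkl]
  rw [Finset.sum_congr rfl this]
  simp [Finset.sum_const, mul_comm]

lemma hda_trace_pow {R : ℝ → Mat} {S : Mat} {t : ℝ}
    (hR : ∀ i j, HasDerivAt (fun s => R s i j) (S i j) t) (k : ℕ) :
    HasDerivAt (fun s => ((R s ^ (k+1)).trace).re)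
      ((k+1 : ℝ) * ((R t ^ k * S).trace).re) t := by
  have h1 := hda_pow hR (k+1)
  have h2 : HasDerivAt (fun s => (R s ^ (k+1)).trace)
      ((∑ l ∈ Finset.range (k+1), R t ^ l * S * R t ^ (k + 1 - 1 - l)).trace) t := by
    have := HasDerivAt.fun_sum (fun i (_ : i ∈ Finset.univ) => h1 i i)
    simpa [Matrix.trace, Matrix.diag] using this
  have h3 : (∑ l ∈ Finset.range (k+1), R t ^ l * S * R t ^ (k + 1 - 1 - l)).trace
      = (k+1 : ℂ) * (R t ^ k * S).trace := by
    simp only [Nat.add_sub_cancel]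
    exact trace_D (R t) S k
  rw [h3] at h2
  have h4 := hasDerivAt_complex_re h2
  have h5 : ((k+1 : ℂ) * (R t ^ k * S).trace).re = (k+1 : ℝ) * ((R t ^ k * S).trace).re := by
    rw [Complex.mul_re]
    norm_num
  rwa [h5] at h4

lemma K_conj (H L : Mat) (hH : H.IsHermitian) :
    (-((1 / 2 : ℂ) • (Lᴴ * L)) - Complex.I • H)ᴴ
      = -((1 / 2 : ℂ) • (Lᴴ * L)) + Complex.I • H := by
  simp only [Matrix.conjTranspose_sub, Matrix.conjTranspose_neg, Matrix.conjTranspose_smul,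
    Matrix.conjTranspose_mul, Matrix.conjTranspose_conjTranspose, hH.eq, Complex.star_def,
    Complex.conj_I, map_div₀, _root_.map_one, _root_.map_ofNat, neg_smul, sub_neg_eq_add]

lemma lindbladAdj_trace_zero (H L A : Mat) (hH : H.IsHermitian) :
    (lindbladAdj H L A).trace = 0 := by
  rw [lindbladAdj, K_conj H L hH, Matrix.trace_add, Matrix.trace_add,
    Matrix.trace_mul_cycle L A Lᴴ, Matrix.trace_mul_comm (Lᴴ * L) A,
    Matrix.trace_mul_comm (-((1 / 2 : ℂ) • (Lᴴ * L)) - Complex.I • H) A,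
    ← Matrix.trace_add, ← Matrix.mul_add, ← Matrix.trace_add, ← Matrix.mul_add]
  have : Lᴴ * L + (-((1 / 2 : ℂ) • (Lᴴ * L)) - Complex.I • H)
      + (-((1 / 2 : ℂ) • (Lᴴ * L)) + Complex.I • H) = 0 := by module
  rw [this, Matrix.mul_zero, Matrix.trace_zero]

lemma lindbladAdj_trace_transfer (H L A X : Mat) (hH : H.IsHermitian) :
    (X * lindbladAdj H L A).trace = (A * lindblad H L X).trace := by
  rw [lindbladAdj, K_conj H L hH, lindblad]
  set K : Mat := -((1 / 2 : ℂ) • (Lᴴ * L)) - Complex.I • H with hKdef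
  rw [Matrix.mul_add, Matrix.mul_add, Matrix.trace_add, Matrix.trace_add]
  have e1 : (X * (L * A * Lᴴ)).trace = (A * (Lᴴ * X * L)).trace := by
    rw [show X * (L * A * Lᴴ) = (X * L) * (A * Lᴴ) by noncomm_ring,
      Matrix.trace_mul_comm, show A * Lᴴ * (X * L) = A * (Lᴴ * X * L) by noncomm_ring]
  have e2 : (X * (K * A)).trace = (A * (X * K)).trace := by
    rw [show X * (K * A) = (X * K) * A by noncomm_ring, Matrix.trace_mul_comm]
  have e3 : (X * (A * (-((1 / 2 : ℂ) • (Lᴴ * L)) + Complex.I • H))).trace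
      = (A * ((-((1 / 2 : ℂ) • (Lᴴ * L)) + Complex.I • H) * X)).trace := by
    rw [show X * (A * (-((1 / 2 : ℂ) • (Lᴴ * L)) + Complex.I • H))
        = (X * A) * (-((1 / 2 : ℂ) • (Lᴴ * L)) + Complex.I • H) by noncomm_ring,
      Matrix.trace_mul_comm,
      show (-((1 / 2 : ℂ) • (Lᴴ * L)) + Complex.I • H) * (X * A)
        = ((-((1 / 2 : ℂ) • (Lᴴ * L)) + Complex.I • H) * X) * A by noncomm_ring,
      Matrix.trace_mul_comm]
  rw [e1, e2, e3, ← Matrix.trace_add, ← Matrix.trace_add, ← Matrix.mul_add, ← Matrix.mul_add]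
  congr 1
  rw [hKdef]
  simp only [Matrix.mul_sub, Matrix.sub_mul, Matrix.mul_add, Matrix.add_mul, Matrix.mul_neg,
    Matrix.neg_mul, mul_smul_comm, smul_mul_assoc, smul_sub]
  module

lemma phi_spectral {A : Mat} (hA : A.IsHermitian) :
    ((A * matLog A).trace).re = ∑ i, hA.eigenvalues i * Real.log (hA.eigenvalues i) := by
  rw [Matrix.trace_mul_comm, matLog_eq hA, trace_diag_conj_mul]
  have hdiag := hA.conjStarAlgAut_star_eigenvectorUnitary
  simp only [Unitary.conjStarAlgAut_star_apply, Unitary.coe_star] at hdiag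
  rw [hdiag]
  rw [Complex.re_sum]
  refine Finset.sum_congr rfl fun i _ => ?_
  rw [Matrix.diagonal_apply_eq]
  simp [← Complex.ofReal_mul, mul_comm]

lemma hasDerivAt_p (a : ℕ → ℝ) (N : ℕ) (x : ℝ) :
    HasDerivAt (fun y => ∑ k ∈ Finset.range N, a k * y^(k+1) / ((k:ℝ)+1))
      (∑ k ∈ Finset.range N, a k * x^k) x := by
  refine HasDerivAt.fun_sum fun k _ => ?_
  have h := ((hasDerivAt_pow (k+1) x).const_mul (a k)).div_const ((k:ℝ)+1)
  refine h.congr_deriv ?_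
  simp only [Nat.add_sub_cancel]
  push_cast
  field_simp

lemma hasDerivAt_xlogx {x : ℝ} (hx : x ≠ 0) :
    HasDerivAt (fun y => y * Real.log y) (Real.log x + 1) x := by
  have h := (hasDerivAt_id x).mul (Real.hasDerivAt_log hx)
  simp [mul_inv_cancel₀ hx] at h
  exact h

lemma approx_bound {c ε : ℝ} (hc : 0 < c) (hc1 : c ≤ 1) (a : ℕ → ℝ) (N : ℕ)
    (hq : ∀ x ∈ Set.Icc c 1, |(∑ k ∈ Finset.range N, a k * x^k) - (Real.log x + 1)| ≤ ε)
    (x : ℝ) (hx : x ∈ Set.Icc c 1) :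
    |((∑ k ∈ Finset.range N, a k * x^(k+1)/((k:ℝ)+1))
        + (c * Real.log c - ∑ k ∈ Finset.range N, a k * c^(k+1)/((k:ℝ)+1)))
      - x * Real.log x| ≤ ε := by
  have hcI : c ∈ Set.Icc c 1 := Set.mem_Icc.2 ⟨le_refl c, hc1⟩
  have hε : 0 ≤ ε := (abs_nonneg _).trans (hq c hcI)
  set f : ℝ → ℝ := fun y => (∑ k ∈ Finset.range N, a k * y^(k+1)/((k:ℝ)+1)) - y * Real.log y
    with hf
  set f' : ℝ → ℝ := fun y => (∑ k ∈ Finset.range N, a k * y^k) - (Real.log y + 1) with hf'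
  have hder : ∀ y ∈ Set.Icc c 1, HasDerivWithinAt f (f' y) (Set.Icc c 1) y := by
    intro y hy
    have hy0 : y ≠ 0 := ne_of_gt (lt_of_lt_of_le hc hy.1)
    exact ((hasDerivAt_p a N y).sub (hasDerivAt_xlogx hy0)).hasDerivWithinAt
  have hbound : ∀ y ∈ Set.Icc c 1, ‖f' y‖ ≤ ε := by
    intro y hy
    rw [Real.norm_eq_abs]
    exact hq y hy
  have key := (convex_Icc c 1).norm_image_sub_le_of_norm_hasDerivWithin_le hder hbound hcI hx
  have e : f x - f c = ((∑ k ∈ Finset.range N, a k * x^(k+1)/((k:ℝ)+1))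
        + (c * Real.log c - ∑ k ∈ Finset.range N, a k * c^(k+1)/((k:ℝ)+1)))
      - x * Real.log x := by
    rw [hf]
    ring
  rw [e] at key
  rw [Real.norm_eq_abs] at key
  refine key.trans ?_
  have : ‖x - c‖ ≤ 1 := by
    rw [Real.norm_eq_abs, abs_of_nonneg (by linarith [hx.1])]
    linarith [hx.2]
  calc ε * ‖x - c‖ ≤ ε * 1 := by gcongr
    _ = ε := mul_one ε

lemma cont_entry_mul {M N : ℝ → Mat} (hM : ∀ i j, Continuous fun s => M s i j)
    (hN : ∀ i j, Continuous fun s => N s i j) :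
    ∀ i j, Continuous fun s => (M s * N s) i j := by
  intro i j
  have h : (fun s => (M s * N s) i j) = fun s => ∑ k, M s i k * N s k j := by
    funext s; rw [Matrix.mul_apply]
  rw [h]
  exact continuous_finset_sum _ fun k _ => (hM i k).mul (hN k j)

end Helpers

/-- along a solution of the master equation  dρ/dt = 𝓛*(ρ)  consisting
of faithful states, the von Neumann entropy satisfies
d/dt S(ρ(t)) = −tr(ρ(t) 𝓛(log ρ(t))). -/
theorem entropy_rate_master_equation {d : ℕ} (H L : Matrix (Fin d) (Fin d) ℂ)
    (hH : H.IsHermitian) (ρ : ℝ → Matrix (Fin d) (Fin d) ℂ)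
    (hderiv : ∀ (t : ℝ) (i j : Fin d),
      HasDerivAt (fun s => ρ s i j) (lindbladAdj H L (ρ t) i j) t)
    (hρ : ∀ t : ℝ, IsFaithfulDensityMatrix (ρ t)) :
    ∀ t : ℝ, HasDerivAt (fun s => vnEntropy (ρ s))
      (-((ρ t * lindblad H L (matLog (ρ t))).trace.re)) t := by
  intro t
  rcases Nat.eq_zero_or_pos d with hd0 | hdpos
  · exfalso
    have h1 := (hρ t).2
    subst hd0
    simp [Matrix.trace] at h1
  haveI : Nonempty (Fin d) := ⟨⟨0, hdpos⟩⟩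
  classical
  set σf : ℝ → Matrix (Fin d) (Fin d) ℂ := fun s => lindbladAdj H L (ρ s) with hσf
  have hherm : ∀ s, (ρ s).IsHermitian := fun s => (hρ s).1.1
  have hderiv' : ∀ (u : ℝ) (i j : Fin d), HasDerivAt (fun s => ρ s i j) (σf u i j) u :=
    fun u i j => hderiv u i j
  obtain ⟨i₀, -, hmin⟩ := Finset.exists_min_image Finset.univ
    (fun i => (hherm t).eigenvalues i) ⟨⟨0, hdpos⟩, Finset.mem_univ _⟩
  set c₀ : ℝ := (hherm t).eigenvalues i₀ with hc₀
  have hc₀pos : 0 < c₀ := (hρ t).1.eigenvalues_pos i₀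
  -- continuity of entries
  have hcont : ∀ i j, Continuous fun s => ρ s i j :=
    fun i j => continuous_iff_continuousAt.2 fun s => (hderiv s i j).continuousAt
  set E : ℝ → ℝ := fun s => ∑ j, ∑ k, ‖ρ s j k - ρ t j k‖ with hE
  have hEcont : Continuous E := by
    refine continuous_finset_sum _ fun j _ => continuous_finset_sum _ fun k _ => ?_
    exact ((hcont j k).sub continuous_const).norm
  have hEt : E t = 0 := by simp [hE]
  have hEev : ∀ᶠ s in nhds t, E s < c₀/2 := by
    have h2 : Filter.Tendsto E (nhds t) (nhds 0) := by
      have := hEcont.tendsto t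
      rwa [hEt] at this
    exact h2.eventually_lt_const (by positivity)
  obtain ⟨δ, hδpos, hδ⟩ := Metric.eventually_nhds_iff.mp hEev
  -- eigenvalue bounds on the ball
  have heig : ∀ s ∈ Metric.ball t δ, ∀ i, (hherm s).eigenvalues i ∈ Set.Icc (c₀/2) 1 := by
    intro s hs i
    set v : Fin d → ℂ := (⇑((hherm s).eigenvectorBasis i) : Fin d → ℂ) with hv
    have hv1 : star v ⬝ᵥ v = 1 := eigvec_unit (hherm s) i
    have hventry : ∀ k, ‖v k‖ ≤ 1 := fun k => eigvec_entry_bound (hherm s) i k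
    have heq : (hherm s).eigenvalues i = (star v ⬝ᵥ (ρ s *ᵥ v)).re := by
      have h0 := (hherm s).eigenvalues_eq i
      simpa using h0
    have hsplit : star v ⬝ᵥ (ρ s *ᵥ v)
        = star v ⬝ᵥ (ρ t *ᵥ v) + star v ⬝ᵥ ((ρ s - ρ t) *ᵥ v) := by
      have hmat : ρ s = ρ t + (ρ s - ρ t) := by abel
      conv_lhs => rw [hmat]
      rw [Matrix.add_mulVec, dotProduct_add]
    have hlow1 : c₀ ≤ (star v ⬝ᵥ (ρ t *ᵥ v)).re :=
      qf_ge (hherm t) (fun j => hmin j (Finset.mem_univ j)) v hv1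
    have hsmall : ‖star v ⬝ᵥ ((ρ s - ρ t) *ᵥ v)‖ ≤ E s := by
      have h0 := dot_bound (ρ s - ρ t) v v hventry hventry
      simpa [hE, Matrix.sub_apply] using h0
    have hEs : E s < c₀/2 := hδ (Metric.mem_ball.mp hs)
    constructor
    · rw [heq, hsplit, Complex.add_re]
      have h6 : |(star v ⬝ᵥ ((ρ s - ρ t) *ᵥ v)).re| ≤ E s :=
        (Complex.abs_re_le_norm _).trans hsmall
      have h7 := (abs_le.mp h6).1
      linarith
    · have h1c := trace_pow (hherm s) 1
      rw [pow_one, (hρ s).2] at h1c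
      have h2 : (1:ℝ) = ∑ j, (hherm s).eigenvalues j := by
        have h3 := congrArg Complex.re h1c
        rw [Complex.re_sum] at h3
        simpa using h3
      rw [h2]
      exact Finset.single_le_sum (f := fun j => (hherm s).eigenvalues j)
        (fun j _ => ((hρ s).1.eigenvalues_pos j).le) (Finset.mem_univ i)
  have hc₀le1 : c₀ ≤ 1 := by
    have := (heig t (Metric.mem_ball_self hδpos) i₀).2
    exact this
  -- continuity of σf entries and bound on ball
  have hσcont : ∀ i j, Continuous fun s => σf s i j := by
    have h1 : ∀ i j, Continuous fun s => (L * ρ s) i j :=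
      cont_entry_mul (fun _ _ => continuous_const) hcont
    have h2 : ∀ i j, Continuous fun s => (L * ρ s * Lᴴ) i j :=
      cont_entry_mul h1 (fun _ _ => continuous_const)
    have h3 : ∀ i j, Continuous fun s =>
        ((-((1 / 2 : ℂ) • (Lᴴ * L)) - Complex.I • H) * ρ s) i j :=
      cont_entry_mul (fun _ _ => continuous_const) hcont
    have h4 : ∀ i j, Continuous fun s =>
        (ρ s * (-((1 / 2 : ℂ) • (Lᴴ * L)) - Complex.I • H)ᴴ) i j :=
      cont_entry_mul hcont (fun _ _ => continuous_const)
    intro i j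
    have he : (fun s => σf s i j) = fun s => (L * ρ s * Lᴴ) i j
        + ((-((1 / 2 : ℂ) • (Lᴴ * L)) - Complex.I • H) * ρ s) i j
        + (ρ s * (-((1 / 2 : ℂ) • (Lᴴ * L)) - Complex.I • H)ᴴ) i j := by
      funext s
      simp [hσf, lindbladAdj, Matrix.add_apply]
    rw [he]
    exact ((h2 i j).add (h3 i j)).add (h4 i j)
  set Sσ : ℝ → ℝ := fun s => ∑ j, ∑ k, ‖σf s j k‖ with hSσ
  have hSσcont : Continuous Sσ := by
    refine continuous_finset_sum _ fun j _ => continuous_finset_sum _ fun k _ => ?_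
    exact (hσcont j k).norm
  obtain ⟨s₀, hs₀mem, hs₀max'⟩ := (isCompact_closedBall t δ).exists_isMaxOn
    ⟨t, Metric.mem_closedBall_self hδpos.le⟩ hSσcont.continuousOn
  have hs₀max : ∀ s ∈ Metric.closedBall t δ, Sσ s ≤ Sσ s₀ := fun s hs => hs₀max' hs
  set B : ℝ := Sσ s₀ with hBdef
  have hBnonneg : 0 ≤ B := by
    refine le_trans ?_ (hs₀max t (Metric.mem_closedBall_self hδpos.le))
    exact Finset.sum_nonneg fun j _ => Finset.sum_nonneg fun k _ => norm_nonneg _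
  have hSB : ∀ s ∈ Metric.ball t δ, Sσ s ≤ B :=
    fun s hs => hs₀max s (Metric.ball_subset_closedBall hs)
  -- polynomial approximations
  have hlogcont : ContinuousOn (fun x => Real.log x + 1) (Set.Icc (c₀/2) 1) := by
    refine ContinuousOn.add ?_ continuousOn_const
    refine Real.continuousOn_log.mono ?_
    intro x hx
    have : (0:ℝ) < x := lt_of_lt_of_le (by positivity) hx.1
    exact ne_of_gt this
  have hqex : ∀ n : ℕ, ∃ p : Polynomial ℝ,
      ∀ x ∈ Set.Icc (c₀/2) 1, |p.eval x - (Real.log x + 1)| < 1/((n:ℝ)+1) :=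
    fun n => exists_polynomial_near_of_continuousOn _ _ _ hlogcont _ (by positivity)
  choose q hqspec using hqex
  set N : ℕ → ℕ := fun n => (q n).natDegree + 1 with hN
  set a : ℕ → ℕ → ℝ := fun n k => (q n).coeff k with ha
  have heval : ∀ n x, (q n).eval x = ∑ k ∈ Finset.range (N n), a n k * x^k := by
    intro n x
    rw [Polynomial.eval_eq_sum_range]
  set pF : ℕ → ℝ → ℝ := fun n x => ∑ k ∈ Finset.range (N n), a n k * x^(k+1) / ((k:ℝ)+1)
    with hpF
  set bC : ℕ → ℝ := fun n => (c₀/2) * Real.log (c₀/2) - pF n (c₀/2) with hbC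
  set F : ℕ → ℝ → ℝ := fun n s =>
    (∑ k ∈ Finset.range (N n), a n k / ((k:ℝ)+1) * ((ρ s ^ (k+1)).trace).re) + d * bC n with hF
  set F' : ℕ → ℝ → ℝ := fun n s =>
    ∑ k ∈ Finset.range (N n), a n k * (((ρ s ^ k) * σf s).trace).re with hF'
  set φ : ℝ → ℝ := fun s => ((ρ s * matLog (ρ s)).trace).re with hφ
  set ψ : ℝ → ℝ := fun s => (((matLog (ρ s) + 1) * σf s).trace).re with hψ
  -- eigenvalue traces
  have htrpow : ∀ s (m : ℕ), ((ρ s ^ m).trace).re = ∑ i, ((hherm s).eigenvalues i)^m := by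
    intro s m
    rw [trace_pow (hherm s) m, Complex.re_sum]
    refine Finset.sum_congr rfl fun i _ => ?_
    rw [← Complex.ofReal_pow, Complex.ofReal_re]
  -- derivative of F n
  have hFderiv : ∀ n : ℕ, ∀ x ∈ Metric.ball t δ, HasDerivAt (F n) (F' n x) x := by
    intro n x _
    have hsum : HasDerivAt
        (fun s => ∑ k ∈ Finset.range (N n), a n k / ((k:ℝ)+1) * ((ρ s ^ (k+1)).trace).re)
        (∑ k ∈ Finset.range (N n), a n k * (((ρ x ^ k) * σf x).trace).re) x := by
      refine HasDerivAt.fun_sum fun k _ => ?_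
      have h := (hda_trace_pow (hderiv' x) k).const_mul (a n k / ((k:ℝ)+1))
      refine h.congr_deriv ?_
      field_simp
    exact hsum.add_const ((d:ℝ) * bC n)
  -- value identity
  have hFval : ∀ n s, F n s = ∑ i, (pF n ((hherm s).eigenvalues i) + bC n) := by
    intro n s
    have step1 : (∑ k ∈ Finset.range (N n), a n k / ((k:ℝ)+1) * ((ρ s ^ (k+1)).trace).re)
        = ∑ i, pF n ((hherm s).eigenvalues i) := by
      rw [show (∑ k ∈ Finset.range (N n), a n k / ((k:ℝ)+1) * ((ρ s ^ (k+1)).trace).re)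
          = ∑ k ∈ Finset.range (N n), ∑ i, a n k * ((hherm s).eigenvalues i)^(k+1) / ((k:ℝ)+1)
          from Finset.sum_congr rfl fun k _ => by
            rw [htrpow s (k+1), Finset.mul_sum]
            exact Finset.sum_congr rfl fun i _ => by ring]
      rw [Finset.sum_comm]
    have step2 : (d:ℝ) * bC n = ∑ _i : Fin d, bC n := by
      simp [Finset.sum_const, Finset.card_univ]
    calc F n s = (∑ k ∈ Finset.range (N n), a n k / ((k:ℝ)+1) * ((ρ s ^ (k+1)).trace).re)
          + (d:ℝ) * bC n := rfl
      _ = (∑ i, pF n ((hherm s).eigenvalues i)) + ∑ _i : Fin d, bC n := by rw [step1, step2]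
      _ = ∑ i, (pF n ((hherm s).eigenvalues i) + bC n) := by
          rw [← Finset.sum_add_distrib]
  have hφval : ∀ s, φ s = ∑ i, ((hherm s).eigenvalues i) * Real.log ((hherm s).eigenvalues i) :=
    fun s => phi_spectral (hherm s)
  -- pointwise bound
  have hFbound : ∀ n : ℕ, ∀ s ∈ Metric.ball t δ, |F n s - φ s| ≤ d * (1/((n:ℝ)+1)) := by
    intro n s hs
    rw [hFval n s, hφval s, ← Finset.sum_sub_distrib]
    have hterm : ∀ i, |(pF n ((hherm s).eigenvalues i) + bC n)
        - ((hherm s).eigenvalues i) * Real.log ((hherm s).eigenvalues i)| ≤ 1/((n:ℝ)+1) := by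
      intro i
      have hq' : ∀ x ∈ Set.Icc (c₀/2) 1,
          |(∑ k ∈ Finset.range (N n), a n k * x^k) - (Real.log x + 1)| ≤ 1/((n:ℝ)+1) := by
        intro x hx
        rw [← heval n x]
        exact (hqspec n x hx).le
      have h0 := approx_bound (by positivity) (by linarith) (a n) (N n) hq'
        ((hherm s).eigenvalues i) (heig s hs i)
      simpa [hpF, hbC] using h0
    calc |∑ i, ((pF n ((hherm s).eigenvalues i) + bC n)
          - ((hherm s).eigenvalues i) * Real.log ((hherm s).eigenvalues i))|
        ≤ ∑ i, |(pF n ((hherm s).eigenvalues i) + bC n)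
          - ((hherm s).eigenvalues i) * Real.log ((hherm s).eigenvalues i)| :=
          Finset.abs_sum_le_sum_abs _ _
      _ ≤ ∑ _i : Fin d, 1/((n:ℝ)+1) := Finset.sum_le_sum fun i _ => hterm i
      _ = d * (1/((n:ℝ)+1)) := by simp [Finset.sum_const, Finset.card_univ]
  -- pointwise convergence
  have hFtend : ∀ s ∈ Metric.ball t δ,
      Filter.Tendsto (fun n => F n s) Filter.atTop (nhds (φ s)) := by
    intro s hs
    have h0 : Filter.Tendsto (fun n : ℕ => (d:ℝ) * (1/((n:ℝ)+1))) Filter.atTop (nhds 0) := by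
      have h1 : Filter.Tendsto (fun n : ℕ => 1/((n:ℝ)+1)) Filter.atTop (nhds 0) :=
        tendsto_one_div_add_atTop_nhds_zero_nat
      simpa using h1.const_mul (d:ℝ)
    have h2 : Filter.Tendsto (fun n => F n s - φ s) Filter.atTop (nhds 0) :=
      squeeze_zero_norm (fun n => by
        simpa [Real.norm_eq_abs] using hFbound n s hs) h0
    have h3 := h2.add_const (φ s)
    simpa using h3
  -- uniform convergence of derivatives
  have hF'bound : ∀ n : ℕ, ∀ s ∈ Metric.ball t δ,
      |ψ s - F' n s| ≤ d * ((1/((n:ℝ)+1)) * B) := by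
    intro n s hs
    have hQ : ((∑ k ∈ Finset.range (N n), ((a n k : ℂ)) • ρ s ^ k) * σf s).trace.re = F' n s := by
      rw [Finset.sum_mul, Matrix.trace_sum, Complex.re_sum]
      refine Finset.sum_congr rfl fun k _ => ?_
      rw [smul_mul_assoc, Matrix.trace_smul, smul_eq_mul, Complex.re_ofReal_mul]
    have hdiff : ψ s - F' n s
        = -(((((∑ k ∈ Finset.range (N n), ((a n k : ℂ)) • ρ s ^ k) - matLog (ρ s) - 1)
            * σf s).trace).re) := by
      rw [← hQ]
      rw [Matrix.sub_mul, Matrix.sub_mul, Matrix.trace_sub, Matrix.trace_sub]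
      have hψs : ψ s = (((matLog (ρ s) + 1) * σf s).trace).re := rfl
      rw [hψs, Matrix.add_mul, Matrix.one_mul, Matrix.trace_add]
      simp only [Complex.sub_re, Complex.add_re]
      ring
    rw [hdiff, abs_neg, err_matrix (hherm s) (a n) (N n)]
    have hμ : ∀ i, |(∑ k ∈ Finset.range (N n), a n k * ((hherm s).eigenvalues i)^k)
        - Real.log ((hherm s).eigenvalues i) - 1| ≤ 1/((n:ℝ)+1) := by
      intro i
      have h0 := (hqspec n ((hherm s).eigenvalues i) (heig s hs i)).le
      rw [heval n] at h0
      calc |(∑ k ∈ Finset.range (N n), a n k * ((hherm s).eigenvalues i)^k)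
          - Real.log ((hherm s).eigenvalues i) - 1|
          = |(∑ k ∈ Finset.range (N n), a n k * ((hherm s).eigenvalues i)^k)
          - (Real.log ((hherm s).eigenvalues i) + 1)| := by rw [sub_sub]
        _ ≤ 1/((n:ℝ)+1) := h0
    have hbnd := trace_diag_conj_mul_re_bound ((hherm s).eigenvectorUnitary)
      (fun i => (∑ k ∈ Finset.range (N n), a n k * ((hherm s).eigenvalues i)^k)
        - Real.log ((hherm s).eigenvalues i) - 1) (σf s) hμ
    refine hbnd.trans ?_
    have hSs : ∑ j, ∑ k, ‖σf s j k‖ ≤ B := hSB s hs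
    gcongr
  have hunif : TendstoUniformlyOn F' ψ Filter.atTop (Metric.ball t δ) := by
    rw [Metric.tendstoUniformlyOn_iff]
    intro ε hε
    have h0 : Filter.Tendsto (fun n : ℕ => (d:ℝ) * ((1/((n:ℝ)+1)) * B))
        Filter.atTop (nhds 0) := by
      have h1 : Filter.Tendsto (fun n : ℕ => 1/((n:ℝ)+1)) Filter.atTop (nhds 0) :=
        tendsto_one_div_add_atTop_nhds_zero_nat
      have h2 := h1.const_mul ((d:ℝ) * B)
      simp only [mul_zero] at h2
      refine h2.congr fun n => ?_
      ring
    have hev := h0.eventually_lt_const hε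
    filter_upwards [hev] with n hn s hs
    rw [Real.dist_eq]
    exact lt_of_le_of_lt (hF'bound n s hs) hn
  have hkey : HasDerivAt φ (ψ t) t :=
    hasDerivAt_of_tendstoUniformlyOn Metric.isOpen_ball hunif
      (Filter.Eventually.of_forall hFderiv) hFtend (Metric.mem_ball_self hδpos)
  have hneg : HasDerivAt (fun s => vnEntropy (ρ s)) (-(ψ t)) t := by
    have h2 := hkey.neg
    have h3 : (fun s => -(φ s)) = fun s => vnEntropy (ρ s) := by
      funext s
      simp [vnEntropy, hφ, Complex.neg_re]
    rw [show (-φ) = (fun s => -(φ s)) from rfl, h3] at h2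
    exact h2
  have hfinal : -(ψ t) = -((ρ t * lindblad H L (matLog (ρ t))).trace.re) := by
    have h1 : ((matLog (ρ t) + 1) * σf t).trace
        = (ρ t * lindblad H L (matLog (ρ t))).trace := by
      rw [Matrix.add_mul, Matrix.one_mul, Matrix.trace_add]
      have h2 : σf t = lindbladAdj H L (ρ t) := rfl
      rw [h2, lindbladAdj_trace_zero H L (ρ t) hH, add_zero]
      exact lindbladAdj_trace_transfer H L (ρ t) (matLog (ρ t)) hH
    have h3 : ψ t = (((matLog (ρ t) + 1) * σf t).trace).re := rfl
    rw [h3, h1]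
  rwa [hfinal] at hneg
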